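/- A G_δ subset G of the cube I^{ω₁} (I = [0,1]) is Lindelöf if, and only if, there exists α < ω₁ such that G = p_β⁻¹[p_β[G]] for all β ≥ α, where p_β : I^{ω₁} → I^β is the projection. -/

import Mathlib

open Set Cardinal

/-- The ordinal `ω₁` as a (linearly ordered) type. -/
noncomputable abbrev Omega1 : Type := (Cardinal.aleph 1).ord.ToType

/-- Any countable subset of `ω₁` is (strictly) bounded above. -/
lemma omega1_bounded {S : Set Omega1} (hS : S.Countable) : ∃ a : Omega1, ∀ b ∈ S, b < a := by
  have h2 : #S < Cardinal.aleph 1 := (Cardinal.countable_iff_lt_aleph_one S).mp hS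
  exact not_isCofinal_iff.mp fun hc => (Order.cof_le hc).not_gt
    (by rw [Ordinal.cof_toType, Cardinal.isRegular_aleph_one.cof_ord]; exact h2)

/-- Initial segments of `ω₁` are countable. -/
lemma omega1_Iio_countable (α : Omega1) : Countable {i : Omega1 // i < α} :=
  ((Cardinal.countable_iff_lt_aleph_one _).mpr (Cardinal.mk_Iio_toType_ord_lt α)).to_subtype

/-- If `G` depends only on coordinates below `α < ω₁`, then `G` is Lindelöf:
`G` is the preimage of a subset of the second-countable (hence hereditarily Lindelöf)
space `I^α` under the projection, which restricts to a perfect map on `G`. -/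
lemma lindelof_of_dep (G : Set (Omega1 → unitInterval)) (α : Omega1)
    (hdep : ∀ z ∈ G, ∀ w : Omega1 → unitInterval, (∀ i, i < α → w i = z i) → w ∈ G) :
    IsLindelof G := by
  haveI := omega1_Iio_countable α
  let p : (Omega1 → unitInterval) → ({i : Omega1 // i < α} → unitInterval) :=
    fun x j => x j.1
  have hp : Continuous p := continuous_pi fun j => continuous_apply _
  let S := p '' G
  have hsat : ∀ x, p x ∈ S → x ∈ G := by
    rintro x ⟨z, hz, hpz⟩
    exact hdep z hz x fun i hi => (congrFun hpz ⟨i, hi⟩).symm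
  rw [isLindelof_iff_countable_subcover]
  intro ι U hUo hGU
  -- finite subcovers of the (compact) fibers of `p` over `S`
  have hfib : ∀ s ∈ S, ∃ t : Finset ι, p ⁻¹' {s} ⊆ ⋃ i ∈ t, U i := by
    intro s hs
    have hsubG : p ⁻¹' {s} ⊆ G := fun x hx => hsat x (by rw [hx]; exact hs)
    have hcomp : IsCompact (p ⁻¹' {s}) := (isClosed_singleton.preimage hp).isCompact
    exact hcomp.elim_finite_subcover U hUo (hsubG.trans hGU)
  choose! t ht using hfib
  let V := fun s => ⋃ i ∈ t s, U i
  have hVo : ∀ s, IsOpen (V s) := fun s => isOpen_biUnion fun i _ => hUo i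
  -- tube lemma: open neighborhoods in the base whose preimage stays inside `V s`
  let W := fun s => (p '' (V s)ᶜ)ᶜ
  have hWo : ∀ s, IsOpen (W s) := by
    intro s
    exact (((hVo s).isClosed_compl.isCompact).image hp).isClosed.isOpen_compl
  have hsW : ∀ s ∈ S, s ∈ W s := by
    rintro s hs ⟨x, hxV, hpx⟩
    exact hxV (ht s hs hpx)
  have hpre : ∀ s, p ⁻¹' (W s) ⊆ V s := by
    intro s x hx
    by_contra hxV
    exact hx (mem_image_of_mem p hxV)
  -- `S` is Lindelöf since `I^α` is second countable
  have hSL : IsLindelof S := HereditarilyLindelof_LindelofSets S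
  obtain ⟨T, hTc, hTcov⟩ := hSL.elim_countable_subcover (fun s : S => W s.1)
    (fun s => hWo s.1) (fun s hs => mem_iUnion.mpr ⟨⟨s, hs⟩, hsW s hs⟩)
  refine ⟨⋃ s ∈ T, (t s.1 : Set ι), hTc.biUnion fun s _ => (t s.1).countable_toSet, ?_⟩
  intro x hx
  have hpx : p x ∈ S := mem_image_of_mem p hx
  obtain ⟨s, hsT, hxW⟩ := mem_iUnion₂.mp (hTcov hpx)
  obtain ⟨i, hit, hxU⟩ := mem_iUnion₂.mp (hpre s.1 hxW)
  exact mem_iUnion₂.mpr ⟨i, mem_iUnion₂.mpr ⟨s, hsT, hit⟩, hxU⟩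

/-- A Lindelöf G_δ subset of `I^{ω₁}` depends only on coordinates below some `α < ω₁`. -/
lemma dep_of_lindelof (G : Set (Omega1 → unitInterval))
    (U : ℕ → Set (Omega1 → unitInterval)) (hUo : ∀ n, IsOpen (U n)) (hGU : G = ⋂ n, U n)
    (hL : IsLindelof G) :
    ∃ α : Omega1, ∀ z ∈ G, ∀ w : Omega1 → unitInterval, (∀ i, i < α → w i = z i) → w ∈ G := by
  -- around every point of `G` pick a basic open box inside `U n`
  have key : ∀ n : ℕ, ∀ x ∈ G, ∃ (F : Finset Omega1) (u : Omega1 → Set unitInterval),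
      (∀ a ∈ F, IsOpen (u a) ∧ x a ∈ u a) ∧ (F : Set Omega1).pi u ⊆ U n := by
    intro n x hx
    have hxU : x ∈ U n := by rw [hGU] at hx; exact mem_iInter.mp hx n
    exact isOpen_pi_iff.mp (hUo n) x hxU
  choose! F u hFu hsub using key
  -- countable subcover of `G` by boxes, for each `n`
  have hcov : ∀ n : ℕ, ∃ T : Set G, T.Countable ∧
      G ⊆ ⋃ x ∈ T, ((F n x.1 : Set Omega1)).pi (u n x.1) := by
    intro n
    apply hL.elim_countable_subcover (fun x : G => ((F n x.1 : Set Omega1)).pi (u n x.1))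
    · intro x
      exact isOpen_set_pi (F n x.1).finite_toSet fun a ha => (hFu n x.1 x.2 a ha).1
    · intro x hx
      exact mem_iUnion.mpr ⟨⟨x, hx⟩, fun a ha => (hFu n x hx a ha).2⟩
  choose T hTc hTcov using hcov
  -- all the coordinates used form a countable, hence bounded, subset of `ω₁`
  have hCc : (⋃ n, ⋃ x ∈ T n, (F n x.1 : Set Omega1)).Countable :=
    countable_iUnion fun n => (hTc n).biUnion fun x _ => (F n x.1).countable_toSet
  obtain ⟨α, hα⟩ := omega1_bounded hCc
  refine ⟨α, fun z hz w hw => ?_⟩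
  rw [hGU]
  refine mem_iInter.mpr fun n => ?_
  obtain ⟨x, hxT, hzB⟩ := mem_iUnion₂.mp (hTcov n hz)
  refine hsub n x.1 x.2 (fun a ha => ?_)
  have haC : a ∈ ⋃ n, ⋃ x ∈ T n, (F n x.1 : Set Omega1) :=
    mem_iUnion.mpr ⟨n, mem_iUnion₂.mpr ⟨x, hxT, ha⟩⟩
  rw [hw a (hα a haC)]
  exact hzB a ha

theorem stmt12 (G : Set (Omega1 → unitInterval))
    (hG : ∃ U : ℕ → Set (Omega1 → unitInterval), (∀ n, IsOpen (U n)) ∧ G = ⋂ n, U n) :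
    IsLindelof G ↔
      ∃ α : Omega1, ∀ β : Omega1, α ≤ β →
        ∀ z ∈ G, ∀ w : Omega1 → unitInterval, (∀ i, i < β → w i = z i) → w ∈ G := by
  obtain ⟨U, hUo, hGU⟩ := hG
  constructor
  · intro hL
    obtain ⟨α, hα⟩ := dep_of_lindelof G U hUo hGU hL
    exact ⟨α, fun β hβ z hz w hw =>
      hα z hz w fun i hi => hw i (lt_of_lt_of_le hi hβ)⟩
  · rintro ⟨α, hα⟩
    exact lindelof_of_dep G α (hα α le_rfl)
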